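/- Let α, M be real numbers and N ≥ 1 an integer. Let ψ : ℝ → ℂ be 1-periodic with |ψ(x) − ψ(y)| ≤ C·‖x − y‖ for all x, y ∈ ℝ and |ψ(x)| ≤ K for all x, and let φ : ℝ → ℂ satisfy |Σ_{r=1}^{k} φ(r·α)| ≤ B·k for every integer 1 ≤ k ≤ N. Then |Σ_{r=1}^{N} ψ(r·M·α)·φ(r·α)| ≤ B·N·( (1/2)·C·‖M·α‖·(N − 1) + K ). -/

import Mathlib

/-- Partial Birkhoff summation: if `ψ : ℝ → ℂ` is `1`-periodic, Lipschitz with constant `C`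
for the distance to the nearest integer, and bounded by `K`, and if the partial Birkhoff
sums of `φ` satisfy `|Σ_{r=1}^k φ(rα)| ≤ B·k` for all `1 ≤ k ≤ N`, then
`|Σ_{r=1}^N ψ(rMα)·φ(rα)| ≤ B·N·((1/2)·C·‖Mα‖·(N−1) + K)`. -/
theorem stmt14 (α M : ℝ) (N : ℕ) (hN : 1 ≤ N)
    (ψ : ℝ → ℂ) (C K B : ℝ)
    (hper : ∀ x : ℝ, ψ (x + 1) = ψ x)
    (hlip : ∀ x y : ℝ, ‖ψ x - ψ y‖ ≤ C * |x - y - (round (x - y) : ℤ)|)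
    (hK : ∀ x : ℝ, ‖ψ x‖ ≤ K)
    (φ : ℝ → ℂ)
    (hφ : ∀ k : ℕ, 1 ≤ k → k ≤ N →
      ‖∑ r ∈ Finset.Icc 1 k, φ ((r : ℝ) * α)‖ ≤ B * k) :
    ‖∑ r ∈ Finset.Icc 1 N, ψ ((r : ℝ) * M * α) * φ ((r : ℝ) * α)‖ ≤
      B * N * ((1 / 2) * C * |M * α - (round (M * α) : ℤ)| * ((N : ℝ) - 1) + K) := by
  classical
  set d : ℝ := |M * α - (round (M * α) : ℤ)| with hd
  have hB0 : 0 ≤ B := by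
    have h := hφ 1 le_rfl hN
    have := (norm_nonneg _).trans h
    simpa using this
  have hK0 : 0 ≤ K := (norm_nonneg _).trans (hK 0)
  set f : ℕ → ℂ := fun i => ψ (((1 + i : ℕ) : ℝ) * M * α) with hf
  set g : ℕ → ℂ := fun i => φ (((1 + i : ℕ) : ℝ) * α) with hg
  set T : ℕ → ℂ := fun m => ∑ j ∈ Finset.range m, g j with hT
  -- partial sums of g are the Birkhoff sums
  have hTS : ∀ m : ℕ, T m = ∑ r ∈ Finset.Icc 1 m, φ ((r : ℝ) * α) := by
    intro m
    rw [← Finset.Ico_add_one_right_eq_Icc, Finset.sum_Ico_eq_sum_range]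
    simp [hT, hg]
  have hTb : ∀ m : ℕ, 1 ≤ m → m ≤ N → ‖T m‖ ≤ B * m := by
    intro m h1 h2; rw [hTS]; exact hφ m h1 h2
  -- Lipschitz step bound
  have hstep : ∀ i : ℕ, ‖f (i + 1) - f i‖ ≤ C * d := by
    intro i
    have h := hlip (((1 + (i + 1) : ℕ) : ℝ) * M * α) (((1 + i : ℕ) : ℝ) * M * α)
    have he : ((1 + (i + 1) : ℕ) : ℝ) * M * α - ((1 + i : ℕ) : ℝ) * M * α = M * α := by
      push_cast; ring
    rw [he] at h
    exact h
  have hCd : 0 ≤ C * d := (norm_nonneg _).trans (hstep 0)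
  -- rewrite the sum as a range sum
  have hre : (∑ r ∈ Finset.Icc 1 N, ψ ((r : ℝ) * M * α) * φ ((r : ℝ) * α)) =
      ∑ i ∈ Finset.range N, f i * g i := by
    rw [← Finset.Ico_add_one_right_eq_Icc, Finset.sum_Ico_eq_sum_range]
    simp [hf, hg]
  rw [hre]
  have habel : ∑ i ∈ Finset.range N, f i * g i =
      f (N - 1) * T N - ∑ i ∈ Finset.range (N - 1), (f (i + 1) - f i) * T (i + 1) := by
    simpa [smul_eq_mul] using Finset.sum_range_by_parts f g N
  rw [habel]
  have h1 : ‖f (N - 1) * T N‖ ≤ K * (B * N) := by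
    rw [norm_mul]
    exact mul_le_mul (hK _) (hTb N hN le_rfl) (norm_nonneg _) hK0
  have h2 : ‖∑ i ∈ Finset.range (N - 1), (f (i + 1) - f i) * T (i + 1)‖ ≤
      ∑ i ∈ Finset.range (N - 1), (C * d) * (B * (i + 1 : ℕ)) := by
    refine (norm_sum_le _ _).trans (Finset.sum_le_sum ?_)
    intro i hi
    rw [Finset.mem_range] at hi
    have hi1 : 1 ≤ i + 1 := Nat.le_add_left 1 i
    have hi2 : i + 1 ≤ N := by omega
    rw [norm_mul]
    exact mul_le_mul (hstep i) (hTb (i+1) hi1 hi2) (norm_nonneg _) hCd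
  have h3 : ‖f (N - 1) * T N - ∑ i ∈ Finset.range (N - 1), (f (i + 1) - f i) * T (i + 1)‖ ≤ K * (B * N) + ∑ i ∈ Finset.range (N - 1), (C * d) * (B * (i + 1 : ℕ)) := by
    refine (norm_sub_le _ _).trans ?_  -- maybe wrong name
    exact add_le_add h1 h2
  refine h3.trans ?_
  have key : ∀ n : ℕ, (∑ i ∈ Finset.range n, ((i : ℝ) + 1)) = n * (n + 1) / 2 := by
    intro n
    induction n with
    | zero => simp
    | succ m ih => rw [Finset.sum_range_succ, ih]; push_cast; ring
  have hsum : ∑ i ∈ Finset.range (N - 1), ((C * d) * (B * ((i + 1 : ℕ) : ℝ))) =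
      (C * d) * B * (((N - 1 : ℕ) : ℝ) * (((N - 1 : ℕ) : ℝ) + 1) / 2) := by
    rw [← key (N - 1), Finset.mul_sum]
    exact Finset.sum_congr rfl fun i _ => by push_cast; ring
  rw [hsum]
  have hc : ((N - 1 : ℕ) : ℝ) = (N : ℝ) - 1 := by
    have : (1 : ℕ) ≤ N := hN
    push_cast [this]
    ring
  rw [hc]
  have h1N : (1 : ℝ) ≤ (N : ℝ) := by exact_mod_cast hN
  nlinarith [mul_nonneg hCd hB0]
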